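/- Let G be a finite abelian group of exponent n, k a field, and suppose M_T ∈ GL_n(k) (T ∈ G) satisfy M_S M_T = ε(S,T) M_{S+T} with ε(S,T)/ε(T,S) = e(S,T) a nondegenerate pairing, |G| = n^2, and M_T^n = α(T)·I for a function α : G → k*. If T ∈ G has exact order r, then the characteristic polynomial of M_T equals (X^r - c)^{n/r} for some c ∈ k* with c^{n/r} = ±α(T); in particular det(M_T) = ± α(T), and if n is odd det(M_T) = α(T). -/

import Mathlib

open Matrix Polynomial

-- helper: eval of charpoly
lemma my_eval_charpoly {k : Type*} [Field k] {n : ℕ} (A : Matrix (Fin n) (Fin n) k) (x : k) :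
    (Matrix.charpoly A).eval x = (x • (1 : Matrix (Fin n) (Fin n) k) - A).det := by
  rw [Matrix.charpoly, ← Polynomial.coe_evalRingHom, RingHom.map_det]
  congr 1
  ext i j
  by_cases h : i = j
  · subst h; simp [charmatrix_apply_eq, Matrix.one_apply]
  · simp [charmatrix_apply_ne _ _ _ h, Matrix.one_apply, h]

section aux
variable {k : Type*} [Field k] {n : ℕ} {G : Type*} [AddCommGroup G]

lemma my_unit_ne_zero (hpos : 0 < n) {B : Matrix (Fin n) (Fin n) k} (hB : IsUnit B) : B ≠ 0 := by
  haveI : NeZero n := ⟨hpos.ne'⟩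
  rintro rfl
  obtain ⟨u, hu⟩ := hB
  have h1 : (u : Matrix (Fin n) (Fin n) k) * ((u⁻¹ : _ˣ) : Matrix (Fin n) (Fin n) k) = 1 :=
    by rw [← Units.val_mul, mul_inv_cancel, Units.val_one]
  rw [hu, zero_mul] at h1
  exact one_ne_zero h1.symm

lemma my_smul_cancel (hpos : 0 < n) {B : Matrix (Fin n) (Fin n) k} (hB : IsUnit B)
    {a b : k} (h : a • B = b • B) : a = b := by
  have : (a - b) • B = 0 := by rw [sub_smul, h, sub_self]
  rcases smul_eq_zero.mp this with h' | h'
  · exact sub_eq_zero.mp h'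
  · exact absurd h' (my_unit_ne_zero hpos hB)

end aux

section aux
variable {k : Type*} [Field k] {n : ℕ} {G : Type*} [AddCommGroup G]
  {M : G → GL (Fin n) k} {ε : G → G → kˣ}

lemma my_conj
    (hmul : ∀ S T : G, (M S : Matrix (Fin n) (Fin n) k) * (M T) =
      (ε S T : k) • (M (S + T) : Matrix (Fin n) (Fin n) k)) (S U : G) :
    (M S : Matrix (Fin n) (Fin n) k) * (M U) =
      ((ε S U * (ε U S)⁻¹ : kˣ) : k) • ((M U : Matrix (Fin n) (Fin n) k) * (M S)) := by
  rw [hmul S U, hmul U S, add_comm U S, smul_smul, ← Units.val_mul, inv_mul_cancel_right]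

end aux

section aux2
variable {k : Type*} [Field k] {n : ℕ} {G : Type*} [AddCommGroup G]
  {M : G → GL (Fin n) k} {ε : G → G → kˣ}

lemma my_isUnit_mul (U V : G) :
    IsUnit ((M U : Matrix (Fin n) (Fin n) k) * (M V)) := by
  have := (M U * M V).isUnit
  rwa [Units.val_mul] at this

lemma my_E_add (hpos : 0 < n)
    (hmul : ∀ S T : G, (M S : Matrix (Fin n) (Fin n) k) * (M T) =
      (ε S T : k) • (M (S + T) : Matrix (Fin n) (Fin n) k)) (S S' U : G) :
    ε (S + S') U * (ε U (S + S'))⁻¹ =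
      (ε S U * (ε U S)⁻¹) * (ε S' U * (ε U S')⁻¹) := by
  set E : G → G → kˣ := fun S U => ε S U * (ε U S)⁻¹ with hE
  have key : (((ε S S' : k) * (E (S + S') U : k)) •
        ((M U : Matrix (Fin n) (Fin n) k) * (M (S + S'))) : Matrix (Fin n) (Fin n) k) =
      (((E S U : k) * (E S' U : k) * (ε S S' : k)) •
        ((M U : Matrix (Fin n) (Fin n) k) * (M (S + S')))) := by
    have h1 : ((M S : Matrix (Fin n) (Fin n) k) * (M S')) * (M U) =
        ((ε S S' : k) * (E (S + S') U : k)) •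
          ((M U : Matrix (Fin n) (Fin n) k) * (M (S + S'))) := by
      rw [hmul S S', smul_mul_assoc, my_conj hmul (S + S') U, smul_smul]
    have h2 : ((M S : Matrix (Fin n) (Fin n) k) * (M S')) * (M U) =
        ((E S U : k) * (E S' U : k) * (ε S S' : k)) •
          ((M U : Matrix (Fin n) (Fin n) k) * (M (S + S'))) := by
      calc ((M S : Matrix (Fin n) (Fin n) k) * (M S')) * (M U)
          = (M S : Matrix (Fin n) (Fin n) k) * ((M S' : Matrix (Fin n) (Fin n) k) * (M U)) := by
            rw [mul_assoc]
        _ = (E S' U : k) • ((M S : Matrix (Fin n) (Fin n) k) * (M U) * (M S')) := by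
            rw [my_conj hmul S' U, mul_smul_comm, mul_assoc]
        _ = (E S' U : k) • (((E S U : k) • ((M U : Matrix (Fin n) (Fin n) k) * (M S))) * (M S')) := by
            rw [my_conj hmul S U]
        _ = ((E S U : k) * (E S' U : k)) • ((M U : Matrix (Fin n) (Fin n) k) * ((M S : Matrix (Fin n) (Fin n) k) * (M S'))) := by
            rw [smul_mul_assoc, smul_smul, mul_comm ((E S' U : k)) ((E S U : k)), mul_assoc]
        _ = ((E S U : k) * (E S' U : k) * (ε S S' : k)) •
            ((M U : Matrix (Fin n) (Fin n) k) * (M (S + S'))) := by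
            rw [hmul S S', mul_smul_comm, smul_smul]
    rw [← h1, h2]
  have hsc := my_smul_cancel hpos (my_isUnit_mul U (S + S')) key
  have hne : (ε S S' : k) ≠ 0 := Units.ne_zero _
  have h3 : (E (S + S') U : k) = (E S U : k) * (E S' U : k) := by
    apply mul_left_cancel₀ hne
    rw [hsc]; ring
  apply Units.ext
  simpa [E, Units.val_mul] using h3
end aux2

/-- In a theta-group-like family `M_T ∈ GL_n(k)` (`T` in a finite abelian group of
order `n²` and exponent `n`, `M_S M_T = ε(S,T) M_{S+T}`, commutator pairing
nondegenerate, `M_T^n = α(T)·I`), if `T` has exact order `r` then the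
characteristic polynomial of `M_T` is `(X^r - c)^{n/r}` with `c^{n/r} = ±α(T)`;
in particular `det(M_T) = ±α(T)`, and `det(M_T) = α(T)` if `n` is odd. -/
theorem stmt_15 {G : Type*} [AddCommGroup G] [Fintype G] {k : Type*} [Field k]
    [IsAlgClosed k] {n : ℕ} (hpos : 0 < n) (hchar : (n : k) ≠ 0)
    (hcard : Fintype.card G = n ^ 2) (hexp : ∀ g : G, n • g = 0)
    (M : G → GL (Fin n) k) (ε : G → G → kˣ)
    (hmul : ∀ S T : G, (M S : Matrix (Fin n) (Fin n) k) * (M T) =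
      (ε S T : k) • (M (S + T) : Matrix (Fin n) (Fin n) k))
    (hnd : ∀ S : G, S ≠ 0 → ∃ T : G, ε S T / ε T S ≠ 1)
    (α : G → kˣ)
    (hα : ∀ T : G, (M T : Matrix (Fin n) (Fin n) k) ^ n =
      (α T : k) • (1 : Matrix (Fin n) (Fin n) k))
    (T : G) (r : ℕ) (hr : addOrderOf T = r) :
    ∃ c : k, c ≠ 0 ∧
      Matrix.charpoly (M T : Matrix (Fin n) (Fin n) k) = (X ^ r - C c) ^ (n / r) ∧
      (c ^ (n / r) = (α T : k) ∨ c ^ (n / r) = -(α T : k)) ∧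
      ((M T : Matrix (Fin n) (Fin n) k).det = (α T : k) ∨
        (M T : Matrix (Fin n) (Fin n) k).det = -(α T : k)) ∧
      (Odd n → (M T : Matrix (Fin n) (Fin n) k).det = (α T : k)) := by
  haveI : NeZero n := ⟨hpos.ne'⟩
  set A := (M T : Matrix (Fin n) (Fin n) k) with hAdef
  have hrpos : 0 < r := hr ▸ addOrderOf_pos T
  haveI : NeZero r := ⟨hrpos.ne'⟩
  have hrdvd : r ∣ n := hr ▸ addOrderOf_dvd_of_nsmul_eq_zero (hexp T)
  set m := n / r with hm
  have hnrm : r * m = n := Nat.mul_div_cancel' hrdvd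
  -- M 0 is scalar
  have hMinv0 : (M 0 : Matrix (Fin n) (Fin n) k) * (((M 0)⁻¹ : GL (Fin n) k) : Matrix (Fin n) (Fin n) k) = 1 := Units.mul_inv _
  have hM0 : (M 0 : Matrix (Fin n) (Fin n) k) = (ε 0 0 : k) • 1 := by
    have h := hmul 0 0
    rw [add_zero] at h
    calc (M 0 : Matrix (Fin n) (Fin n) k)
        = ((M 0 : Matrix (Fin n) (Fin n) k) * (M 0)) * (((M 0)⁻¹ : GL (Fin n) k) : Matrix (Fin n) (Fin n) k) := by
          rw [mul_assoc, hMinv0, mul_one]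
      _ = (ε 0 0 : k) • ((M 0 : Matrix (Fin n) (Fin n) k) * (((M 0)⁻¹ : GL (Fin n) k) : Matrix (Fin n) (Fin n) k)) := by
          rw [h, smul_mul_assoc]
      _ = (ε 0 0 : k) • 1 := by rw [hMinv0]
  -- powers of A
  have hpow : ∀ j : ℕ, ∃ u : kˣ,
      A ^ j = (u : k) • (M (j • T) : Matrix (Fin n) (Fin n) k) := by
    intro j
    induction j with
    | zero =>
      refine ⟨(ε 0 0)⁻¹, ?_⟩
      rw [pow_zero, zero_smul, hM0, smul_smul, ← Units.val_mul, inv_mul_cancel,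
        Units.val_one, one_smul]
    | succ j ih =>
      obtain ⟨u, hu⟩ := ih
      refine ⟨u * ε (j • T) T, ?_⟩
      rw [pow_succ, hu, smul_mul_assoc, hmul, succ_nsmul, smul_smul, Units.val_mul]
  obtain ⟨u, hu⟩ := hpow r
  have hrT : r • T = 0 := by rw [← hr]; exact addOrderOf_nsmul_eq_zero T
  set cu : kˣ := u * ε 0 0 with hcu
  have hAr : A ^ r = (cu : k) • 1 := by
    rw [hu, hrT, hM0, smul_smul, Units.val_mul]
  have hc0 : (cu : k) ≠ 0 := Units.ne_zero cu
  have hcm : (cu : k) ^ m = (α T : k) := by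
    have h1 : A ^ n = ((cu : k) ^ m) • 1 := by
      have h2 : A ^ (r * m) = ((cu : k) ^ m) • 1 := by
        rw [pow_mul, hAr, _root_.smul_pow, one_pow]
      rwa [hnrm] at h2
    rw [hα T] at h1
    exact (my_smul_cancel hpos isUnit_one h1).symm
  -- characteristic polynomial basics
  set p := A.charpoly with hpdef
  have hmono : p.Monic := A.charpoly_monic
  have hpne : p ≠ 0 := hmono.ne_zero
  have hdeg : p.natDegree = n := by
    rw [hpdef, A.charpoly_natDegree_eq_dim, Fintype.card_fin]
  have hsplit : p.Splits := IsAlgClosed.splits p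
  set R := p.roots with hRdef
  have hcardR : R.card = n := by
    rw [hRdef, (Polynomial.splits_iff_card_roots).mp hsplit, hdeg]
  have hprod : p = (R.map fun a => X - C a).prod :=
    hsplit.eq_prod_roots_of_monic hmono
  have hroot_pow : ∀ μ ∈ R, μ ^ r = (cu : k) := by
    intro μ hμ
    have h0 : p.eval μ = 0 := by
      have := Polynomial.isRoot_of_mem_roots hμ
      exact this
    rw [my_eval_charpoly] at h0
    obtain ⟨v, hv0, hv⟩ := (Matrix.exists_mulVec_eq_zero_iff).mpr h0
    have hAv : A.mulVec v = μ • v := by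
      rw [Matrix.sub_mulVec, sub_eq_zero] at hv
      rw [← hv, Matrix.smul_mulVec, Matrix.one_mulVec]
    have hAj : ∀ j : ℕ, (A ^ j).mulVec v = μ ^ j • v := by
      intro j
      induction j with
      | zero => simp [Matrix.one_mulVec]
      | succ j ih =>
        rw [pow_succ, ← Matrix.mulVec_mulVec, hAv, Matrix.mulVec_smul, ih, smul_smul,
          pow_succ, mul_comm]
    have h1 : (cu : k) • v = (μ ^ r) • v := by
      rw [← hAj r, hAr, Matrix.smul_mulVec, Matrix.one_mulVec]
    have h2 : ((cu : k) - μ ^ r) • v = 0 := by rw [sub_smul, h1, sub_self]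
    rcases smul_eq_zero.mp h2 with h' | h'
    · exact (sub_eq_zero.mp h').symm
    · exact absurd h' hv0
  -- the commutator pairing
  have hEadd : ∀ S S' U : G, ε (S + S') U * (ε U (S + S'))⁻¹ =
      (ε S U * (ε U S)⁻¹) * (ε S' U * (ε U S')⁻¹) := fun S S' U => my_E_add hpos hmul S S' U
  have hEzero : ∀ U : G, ε (0 : G) U * (ε U 0)⁻¹ = 1 := by
    intro U
    have h := hEadd 0 0 U
    rw [add_zero] at h
    exact (left_eq_mul.mp h)
  have hEanti : ∀ S U : G, ε S U * (ε U S)⁻¹ = (ε U S * (ε S U)⁻¹)⁻¹ := by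
    intro S U
    rw [mul_inv, inv_inv, mul_comm]
  have hEleft : ∀ (j : ℕ) (S U : G), ε (j • S) U * (ε U (j • S))⁻¹ =
      (ε S U * (ε U S)⁻¹) ^ j := by
    intro j S U
    induction j with
    | zero => rw [zero_smul, pow_zero, hEzero]
    | succ j ih => rw [succ_nsmul, hEadd, ih, pow_succ]
  have hEright : ∀ (j : ℕ) (S U : G), ε S (j • U) * (ε (j • U) S)⁻¹ =
      (ε S U * (ε U S)⁻¹) ^ j := by
    intro j S U
    rw [hEanti S (j • U), hEleft j U S, ← inv_pow, ← hEanti S U]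
  -- the homomorphism S ↦ e(S,T) and its range
  let φ : Multiplicative G →* kˣ :=
    { toFun := fun S => ε (Multiplicative.toAdd S) T * (ε T (Multiplicative.toAdd S))⁻¹,
      map_one' := hEzero T,
      map_mul' := fun S S' => hEadd (Multiplicative.toAdd S) (Multiplicative.toAdd S') T }
  let H : Subgroup kˣ := φ.range
  haveI : Finite H := by
    apply Finite.of_surjective (fun x : Multiplicative G => (⟨φ x, ⟨x, rfl⟩⟩ : H))
    rintro ⟨y, x, rfl⟩
    exact ⟨x, rfl⟩
  obtain ⟨g, hg⟩ := IsCyclic.exists_generator (α := H)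
  set d := orderOf g with hd
  have hdpos : 0 < d := orderOf_pos g
  have hgpow : ∀ x : H, x ^ d = 1 := by
    intro x
    obtain ⟨z, hz⟩ := Subgroup.mem_zpowers_iff.mp (hg x)
    rw [← hz, ← zpow_natCast, ← _root_.zpow_mul, mul_comm, _root_.zpow_mul, zpow_natCast,
      pow_orderOf_eq_one, _root_.one_zpow]
  have hfd : ∀ S : G, (ε S T * (ε T S)⁻¹) ^ d = 1 := by
    intro S
    have hx : (ε S T * (ε T S)⁻¹ : kˣ) ∈ H := ⟨Multiplicative.ofAdd S, rfl⟩
    have h := congrArg (Subtype.val) (hgpow ⟨_, hx⟩)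
    simpa using h
  obtain ⟨S₀m, hS₀⟩ := g.2
  set S₀ : G := Multiplicative.toAdd S₀m with hS₀def
  have hφS₀ : ε S₀ T * (ε T S₀)⁻¹ = (g : kˣ) := hS₀
  have hgr : g ^ r = 1 := by
    have hcoe : ((g : kˣ)) ^ r = 1 := by
      rw [← hφS₀, ← hEright r S₀ T, hrT, hEanti S₀ 0, hEzero S₀, inv_one]
    exact Subtype.ext (by simpa using hcoe)
  have hddvdr : d ∣ r := orderOf_dvd_of_pow_eq_one hgr
  have hdr : d = r := by
    by_contra hne
    have hdT : d • T ≠ 0 := by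
      intro h0
      have hrd : r ∣ d := by
        rw [← hr]
        exact addOrderOf_dvd_of_nsmul_eq_zero h0
      exact hne (Nat.dvd_antisymm hddvdr hrd)
    obtain ⟨U, hU⟩ := hnd (d • T) hdT
    apply hU
    have h1 : ε U (d • T) * (ε (d • T) U)⁻¹ = 1 := by
      rw [hEright d U T, hfd U]
    rw [div_eq_mul_inv, hEanti (d • T) U, h1, inv_one]
  -- ζ is a primitive r-th root of unity
  have hζord : orderOf ((g : kˣ)) = r := by
    have h := orderOf_injective H.subtype H.subtype_injective g
    rw [Subgroup.coe_subtype] at h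
    rw [h, ← hd, hdr]
  set ζ : k := ((g : kˣ) : k) with hζdef
  have hζ0 : ζ ≠ 0 := Units.ne_zero _
  have hζ : IsPrimitiveRoot ζ r := by
    have h := IsPrimitiveRoot.orderOf (g : kˣ)
    rw [hζord] at h
    exact IsPrimitiveRoot.coe_units_iff.mpr h
  -- similarity: ζ • A is conjugate to A
  set U0 : Matrix (Fin n) (Fin n) k := (M S₀ : Matrix (Fin n) (Fin n) k) with hU0
  set Ui : Matrix (Fin n) (Fin n) k := (((M S₀)⁻¹ : GL (Fin n) k) : Matrix (Fin n) (Fin n) k)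
    with hUi
  have hUUi : U0 * Ui = 1 := Units.mul_inv _
  have hconj : U0 * A = ζ • (A * U0) := by
    have h := my_conj hmul S₀ T
    rwa [hφS₀] at h
  have hζA : U0 * A * Ui = ζ • A := by
    rw [hconj, smul_mul_assoc, mul_assoc, hUUi, mul_one]
  have hdetp : ∀ y : k, p.eval y = (y • (1 : Matrix (Fin n) (Fin n) k) - A).det :=
    fun y => my_eval_charpoly A y
  have hsim : ∀ x : k, (x • (1 : Matrix (Fin n) (Fin n) k) - ζ • A).det =
      (x • (1 : Matrix (Fin n) (Fin n) k) - A).det := by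
    intro x
    have h1 : U0 * (x • (1 : Matrix (Fin n) (Fin n) k)) * Ui =
        x • (1 : Matrix (Fin n) (Fin n) k) := by
      rw [mul_smul_comm, mul_one, smul_mul_assoc, hUUi]
    have key : x • (1 : Matrix (Fin n) (Fin n) k) - ζ • A =
        U0 * (x • (1 : Matrix (Fin n) (Fin n) k) - A) * Ui := by
      rw [mul_sub, sub_mul, h1, hζA]
    have hdets : U0.det * Ui.det = 1 := by rw [← Matrix.det_mul, hUUi, Matrix.det_one]
    rw [key, Matrix.det_mul, Matrix.det_mul]
    calc U0.det * (x • (1 : Matrix (Fin n) (Fin n) k) - A).det * Ui.det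
        = (U0.det * Ui.det) * (x • (1 : Matrix (Fin n) (Fin n) k) - A).det := by ring
      _ = (x • (1 : Matrix (Fin n) (Fin n) k) - A).det := by rw [hdets, one_mul]
  have hevalp : ∀ y : k, p.eval y = (R.map fun a => y - a).prod := by
    intro y
    conv_lhs => rw [hprod]
    rw [Polynomial.eval_multiset_prod, Multiset.map_map]
    congr 1
    apply Multiset.map_congr rfl
    intros a _
    simp
  -- the multiset of roots is invariant under multiplication by ζ
  have hRmap : R.map (fun a => ζ * a) = R := by
    have hP : ((R.map fun a => ζ * a).map fun a => X - C a).prod = p := by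
      apply Polynomial.funext
      intro x
      have lhs_eq : Polynomial.eval x (((R.map fun a => ζ * a)).map fun a => X - C a).prod
          = (R.map fun a => x - ζ * a).prod := by
        rw [Polynomial.eval_multiset_prod, Multiset.map_map, Multiset.map_map]
        congr 1
        apply Multiset.map_congr rfl
        intros a _
        simp
      rw [lhs_eq]
      have step1 : (R.map fun a => x - ζ * a).prod
          = ζ ^ n * (R.map fun a => ζ⁻¹ * x - a).prod := by
        have hcong : R.map (fun a => x - ζ * a) = R.map (fun a => ζ * (ζ⁻¹ * x - a)) := by
          apply Multiset.map_congr rfl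
          intros a _
          field_simp
        rw [hcong, Multiset.prod_map_mul, Multiset.map_const', Multiset.prod_replicate, hcardR]
      have step2 : ζ ^ n * (R.map fun a => ζ⁻¹ * x - a).prod
          = (x • (1 : Matrix (Fin n) (Fin n) k) - ζ • A).det := by
        have hfact : x • (1 : Matrix (Fin n) (Fin n) k) - ζ • A =
            ζ • ((ζ⁻¹ * x) • (1 : Matrix (Fin n) (Fin n) k) - A) := by
          rw [smul_sub, smul_smul, mul_inv_cancel_left₀ hζ0]
        rw [hfact, Matrix.det_smul, Fintype.card_fin, ← hdetp, hevalp]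
      rw [step1, step2, hsim, ← hdetp]
    have h2 := congrArg Polynomial.roots hP
    rwa [Polynomial.roots_multiset_prod_X_sub_C] at h2
  classical
  have hcount : ∀ x : k, R.count (ζ * x) = R.count x := by
    intro x
    conv_lhs => rw [← hRmap]
    exact Multiset.count_map_eq_count' _ R (mul_right_injective₀ hζ0) x
  -- pick a root λ₀
  have hRne : R ≠ 0 := by
    intro h
    rw [h] at hcardR
    simp at hcardR
    omega
  obtain ⟨lam, hlam⟩ := Multiset.exists_mem_of_ne_zero hRne
  have hlamr : lam ^ r = (cu : k) := hroot_pow lam hlam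
  have hlam0 : lam ≠ 0 := by
    intro h
    rw [h, zero_pow hrpos.ne'] at hlamr
    exact hc0 hlamr.symm
  have hcount_orbit : ∀ i : ℕ, R.count (ζ ^ i * lam) = R.count lam := by
    intro i
    induction i with
    | zero => rw [pow_zero, one_mul]
    | succ i ih => rw [pow_succ, mul_comm (ζ ^ i) ζ, mul_assoc, hcount, ih]
  have horbit : ∀ μ ∈ R, ∃ i < r, μ = ζ ^ i * lam := by
    intro μ hμ
    have h1 : (μ * lam⁻¹) ^ r = 1 := by
      rw [mul_pow, hroot_pow μ hμ, inv_pow, hlamr, mul_inv_cancel₀ hc0]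
    obtain ⟨i, hi, hζi⟩ := hζ.eq_pow_of_pow_eq_one h1
    exact ⟨i, hi, by rw [hζi, inv_mul_cancel_right₀ hlam0]⟩
  set m' := R.count lam with hm'
  have hnodup : ((Multiset.range r).map fun i => ζ ^ i * lam).Nodup := by
    apply Multiset.Nodup.map_on _ (Multiset.nodup_range r)
    intro i hi j hj hij
    have : ζ ^ i = ζ ^ j := mul_left_injective₀ hlam0 hij
    exact hζ.pow_inj (Multiset.mem_range.mp hi) (Multiset.mem_range.mp hj) this
  have hRS : R = m' • ((Multiset.range r).map fun i => ζ ^ i * lam) := by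
    apply Multiset.ext.mpr
    intro x
    rw [Multiset.count_nsmul]
    by_cases hx : ∃ i < r, x = ζ ^ i * lam
    · obtain ⟨i, hi, rfl⟩ := hx
      have hmem : ζ ^ i * lam ∈ (Multiset.range r).map fun i => ζ ^ i * lam :=
        Multiset.mem_map.mpr ⟨i, Multiset.mem_range.mpr hi, rfl⟩
      rw [Multiset.count_eq_one_of_mem hnodup hmem, mul_one, hcount_orbit]
    · have h1 : R.count x = 0 := by
        apply Multiset.count_eq_zero.mpr
        intro hmem
        obtain ⟨i, hi, hxi⟩ := horbit x hmem
        exact hx ⟨i, hi, hxi⟩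
      have h2 : ((Multiset.range r).map fun i => ζ ^ i * lam).count x = 0 := by
        apply Multiset.count_eq_zero.mpr
        intro hmem
        obtain ⟨i, hi, hxi⟩ := Multiset.mem_map.mp hmem
        exact hx ⟨i, Multiset.mem_range.mp hi, hxi.symm⟩
      rw [h1, h2, mul_zero]
  have hm'm : m' = m := by
    have hcard2 : n = m' * r := by
      rw [← hcardR, hRS, Multiset.card_nsmul, Multiset.card_map, Multiset.card_range]
    have : r * m = m' * r := by rw [hnrm, hcard2]
    rw [mul_comm m' r] at this
    exact (Nat.eq_of_mul_eq_mul_left hrpos this).symm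
  -- final charpoly formula
  have hXr : (X ^ r - C (cu : k)) = ∏ i ∈ Finset.range r, (X - C (ζ ^ i * lam)) :=
    X_pow_sub_C_eq_prod hζ hrpos hlamr
  have hfinal : p = (X ^ r - C (cu : k)) ^ m := by
    rw [hprod, hRS, hm'm, Multiset.map_nsmul, Multiset.prod_nsmul, Multiset.map_map]
    congr 1
    rw [hXr, Finset.prod_eq_multiset_prod]
    congr 1
  have hdet : A.det = (-1 : k) ^ (n + m) * (α T : k) := by
    have h1 : A.det = (-1 : k) ^ n * p.coeff 0 := by
      have h := Matrix.det_eq_sign_charpoly_coeff A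
      rwa [Fintype.card_fin] at h
    rw [h1, Polynomial.coeff_zero_eq_eval_zero, hfinal, Polynomial.eval_pow,
      Polynomial.eval_sub, Polynomial.eval_pow, Polynomial.eval_X, Polynomial.eval_C,
      zero_pow hrpos.ne', zero_sub]
    have hstep : (-(cu : k)) ^ m = (-1 : k) ^ m * (α T : k) := by
      rw [← hcm]; ring
    rw [hstep, pow_add]
    ring
  refine ⟨(cu : k), hc0, hfinal, Or.inl hcm, ?_, ?_⟩
  · rcases Nat.even_or_odd (n + m) with he | ho
    · left; rw [hdet, he.neg_one_pow, one_mul]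
    · right; rw [hdet, ho.neg_one_pow, neg_one_mul]
  · intro hodd
    have hrm_odd : Odd (r * m) := by rwa [hnrm]
    have hodd2 := Nat.odd_mul.mp hrm_odd
    have heven : Even (n + m) := hodd.add_odd hodd2.2
    rw [hdet, heven.neg_one_pow, one_mul]
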